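/- Let n ≥ 4 and let m_1, …, m_n be nonnegative integers with m_{n−1} + m_n odd. Then the standard D_n string polytope Q_n(m) is not a lattice polytope: it has a vertex (extreme point) not lying in ℤ^{n(n−1)}. -/

import Mathlib

/-- Index set for the standard `Dₙ` string polytope: pairs `(i, j)` with
`1 ≤ i ≤ n − 1` and `i ≤ j ≤ 2n − 1 − i`. -/
abbrev SIdx (n : ℕ) := {p : ℕ × ℕ // 1 ≤ p.1 ∧ p.1 ≤ p.2 ∧ p.2 ≤ 2 * n - 1 - p.1}

/-- The `a_{i,j}` coordinate of a point of `ℝ^{n(n−1)}`; coordinates with out-of-range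
indices are `0`. -/
def aC (n : ℕ) (a : SIdx n → ℝ) (i j : ℕ) : ℝ :=
  if h : 1 ≤ i ∧ i ≤ j ∧ j ≤ 2 * n - 1 - i then a ⟨(i, j), h⟩ else 0

/-- The barred coordinate `ā_{i,j} := a_{i,2n−1−j}`. -/
def aB (n : ℕ) (a : SIdx n → ℝ) (i j : ℕ) : ℝ := aC n a i (2 * n - 1 - j)

/-- The correction sum `Σ_{k=1}^{i−1} (a_{k,j−1} − 2a_{k,j} + a_{k,j+1} + ā_{k,j+1}
− 2ā_{k,j} + ā_{k,j−1})` appearing in the defining inequalities of the string polytope. -/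
def sSum (n : ℕ) (a : SIdx n → ℝ) (i j : ℕ) : ℝ :=
  ∑ k ∈ Finset.Icc 1 (i - 1),
    (aC n a k (j - 1) - 2 * aC n a k j + aC n a k (j + 1)
      + aB n a k (j + 1) - 2 * aB n a k j + aB n a k (j - 1))

/-- The standard `Dₙ` string polytope `Qₙ(m)` for nonnegative integers `m_1, …, m_n`. -/
def QPoly (n : ℕ) (m : ℕ → ℕ) : Set (SIdx n → ℝ) :=
  {a |
    (∀ i j, 1 ≤ i → i ≤ n - 2 → i ≤ j → j + 1 ≤ n - 2 → aC n a i j ≥ aC n a i (j + 1)) ∧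
    (∀ i, 1 ≤ i → i ≤ n - 2 →
      aC n a i (n - 2) ≥ aC n a i (n - 1) ∧
      aC n a i (n - 2) ≥ aB n a i (n - 1) ∧
      aC n a i (n - 1) ≥ aB n a i (n - 2) ∧
      aB n a i (n - 1) ≥ aB n a i (n - 2) ∧
      aB n a i i ≥ 0) ∧
    (∀ i j, 1 ≤ i → i ≤ n - 2 → i + 1 ≤ j → j ≤ n - 2 → aB n a i j ≥ aB n a i (j - 1)) ∧
    aC n a (n - 1) (n - 1) ≥ 0 ∧ aB n a (n - 1) (n - 1) ≥ 0 ∧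
    (∀ i j, 1 ≤ i → i ≤ n - 1 → i ≤ j → j ≤ n - 2 →
      aC n a i j ≤ (m j : ℝ) + aC n a i (j + 1) + aB n a i (j + 1) - 2 * aB n a i j
        + aB n a i (j - 1) + sSum n a i j ∧
      aB n a i j ≤ (m j : ℝ) + aB n a i (j - 1) + sSum n a i j) ∧
    (∀ i, 1 ≤ i → i ≤ n - 1 →
      aC n a i (n - 1) ≤ (m (n - 1) : ℝ) + aB n a i (n - 2) +
        ∑ k ∈ Finset.Icc 1 (i - 1),
          (aC n a k (n - 2) - 2 * aC n a k (n - 1) + aB n a k (n - 2)) ∧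
      aB n a i (n - 1) ≤ (m n : ℝ) + aB n a i (n - 2) +
        ∑ k ∈ Finset.Icc 1 (i - 1),
          (aC n a k (n - 2) - 2 * aB n a k (n - 1) + aB n a k (n - 2)))}

/-- For `n ≥ 4` and `m_{n−1} + m_n` odd, the standard `Dₙ` string polytope is not a
lattice polytope: it has a vertex not lying in `ℤ^{n(n−1)}`. -/
-- values of the candidate vertex
noncomputable def pv (n : ℕ) (m : ℕ → ℕ) : ℝ := max (((m (n-1) : ℝ) - (m n : ℝ))/2) 0
noncomputable def qv (n : ℕ) (m : ℕ → ℕ) : ℝ := max (((m n : ℝ) - (m (n-1) : ℝ))/2) 0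
noncomputable def sv (n : ℕ) (m : ℕ → ℕ) : ℝ := ((m (n-1) : ℝ) + (m n : ℝ))/2

noncomputable def fa (n : ℕ) (m : ℕ → ℕ) (i j : ℕ) : ℝ :=
  if i = n-3 then
    if j = n-3 ∨ j = n-2 then pv n m + qv n m
    else if j = n-1 then pv n m
    else if j = n then qv n m
    else 0
  else if i = n-2 then
    if j = n-2 ∨ j = n-1 ∨ j = n then sv n m else 0
  else 0

noncomputable def astar (n : ℕ) (m : ℕ → ℕ) : SIdx n → ℝ := fun p => fa n m p.1.1 p.1.2

section eval
variable {n : ℕ} {m : ℕ → ℕ}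

lemma pv_nonneg : 0 ≤ pv n m := le_max_right _ _
lemma qv_nonneg : 0 ≤ qv n m := le_max_right _ _
lemma sv_nonneg : 0 ≤ sv n m := by
  unfold sv; positivity

lemma pv_sub_qv : pv n m - qv n m = ((m (n-1) : ℝ) - (m n : ℝ))/2 := by
  rcases le_total ((m n : ℝ)) ((m (n-1) : ℝ)) with h | h
  · rw [pv, qv, max_eq_left (by linarith), max_eq_right (by linarith)]; ring
  · rw [pv, qv, max_eq_right (by linarith), max_eq_left (by linarith)]; ring

lemma pv_le : pv n m ≤ (m (n-1) : ℝ) := by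
  apply max_le _ (Nat.cast_nonneg _)
  have : (0:ℝ) ≤ (m n : ℝ) := Nat.cast_nonneg _
  have : (0:ℝ) ≤ (m (n-1) : ℝ) := Nat.cast_nonneg _
  linarith

lemma qv_le : qv n m ≤ (m n : ℝ) := by
  apply max_le _ (Nat.cast_nonneg _)
  have : (0:ℝ) ≤ (m n : ℝ) := Nat.cast_nonneg _
  have : (0:ℝ) ≤ (m (n-1) : ℝ) := Nat.cast_nonneg _
  linarith

lemma sv_eq : sv n m = (m (n-1) : ℝ) + qv n m - pv n m := by
  have := pv_sub_qv (n := n) (m := m); unfold sv at *; linarith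

lemma sv_eq' : sv n m = (m n : ℝ) + pv n m - qv n m := by
  have := pv_sub_qv (n := n) (m := m); unfold sv at *; linarith

-- fa evaluation lemmas
lemma fa_zero_row {i : ℕ} (h1 : i ≠ n-3) (h2 : i ≠ n-2) (j : ℕ) : fa n m i j = 0 := by
  unfold fa; rw [if_neg h1, if_neg h2]

lemma fa_33 : fa n m (n-3) (n-3) = pv n m + qv n m := by
  unfold fa; rw [if_pos rfl, if_pos (Or.inl rfl)]

lemma fa_32 (hn : 4 ≤ n) : fa n m (n-3) (n-2) = pv n m + qv n m := by
  unfold fa; rw [if_pos rfl, if_pos (Or.inr rfl)]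

lemma fa_31 (hn : 4 ≤ n) : fa n m (n-3) (n-1) = pv n m := by
  unfold fa; rw [if_pos rfl, if_neg (by omega), if_pos rfl]

lemma fa_30 (hn : 4 ≤ n) : fa n m (n-3) n = qv n m := by
  unfold fa; rw [if_pos rfl, if_neg (by omega), if_neg (by omega), if_pos rfl]

lemma fa_3z (hn : 4 ≤ n) {j : ℕ} (h1 : j ≠ n-3) (h2 : j ≠ n-2) (h3 : j ≠ n-1) (h4 : j ≠ n) :
    fa n m (n-3) j = 0 := by
  unfold fa; rw [if_pos rfl, if_neg (by tauto), if_neg h3, if_neg h4]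

lemma fa_22 (hn : 4 ≤ n) : fa n m (n-2) (n-2) = sv n m := by
  unfold fa; rw [if_neg (by omega), if_pos rfl, if_pos (Or.inl rfl)]

lemma fa_21 (hn : 4 ≤ n) : fa n m (n-2) (n-1) = sv n m := by
  unfold fa; rw [if_neg (by omega), if_pos rfl, if_pos (Or.inr (Or.inl rfl))]

lemma fa_20 (hn : 4 ≤ n) : fa n m (n-2) n = sv n m := by
  unfold fa; rw [if_neg (by omega), if_pos rfl, if_pos (Or.inr (Or.inr rfl))]

lemma fa_2z (hn : 4 ≤ n) {j : ℕ} (h1 : j ≠ n-2) (h2 : j ≠ n-1) (h3 : j ≠ n) :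
    fa n m (n-2) j = 0 := by
  unfold fa; rw [if_neg (by omega), if_pos rfl, if_neg (by tauto)]

lemma aC_astar (hn : 4 ≤ n) (i j : ℕ) : aC n (astar n m) i j = fa n m i j := by
  unfold aC
  split_ifs with h
  · rfl
  · unfold fa
    split_ifs <;> first | rfl | (exfalso; omega)

lemma aB_astar (hn : 4 ≤ n) (i j : ℕ) : aB n (astar n m) i j = fa n m i (2*n-1-j) := by
  unfold aB; exact aC_astar hn i _

-- linearity
lemma aC_out {a : SIdx n → ℝ} {i j : ℕ} (h : ¬ (1 ≤ i ∧ i ≤ j ∧ j ≤ 2*n-1-i)) :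
    aC n a i j = 0 := by unfold aC; rw [dif_neg h]

lemma aC_combo {x y : SIdx n → ℝ} {c d : ℝ} (i j : ℕ) :
    aC n (c • x + d • y) i j = c * aC n x i j + d * aC n y i j := by
  unfold aC; split_ifs <;> simp

lemma aB_combo {x y : SIdx n → ℝ} {c d : ℝ} (i j : ℕ) :
    aB n (c • x + d • y) i j = c * aB n x i j + d * aB n y i j := aC_combo i _

end eval

section sums
variable {n : ℕ} {m : ℕ → ℕ}

lemma sum_Icc_zero (b : ℕ) (g : ℕ → ℝ) (hz : ∀ k, 1 ≤ k → k ≤ b → g k = 0) :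
    ∑ k ∈ Finset.Icc 1 b, g k = 0 := by
  apply Finset.sum_eq_zero
  intro k hk
  rw [Finset.mem_Icc] at hk
  exact hz k hk.1 hk.2

lemma sum_Icc_top {b : ℕ} (hb : 1 ≤ b) (g : ℕ → ℝ)
    (hz : ∀ k, 1 ≤ k → k ≤ b - 1 → g k = 0) :
    ∑ k ∈ Finset.Icc 1 b, g k = g b := by
  obtain ⟨c, rfl⟩ : ∃ c, b = c + 1 := ⟨b - 1, by omega⟩
  rw [Finset.sum_Icc_succ_top (by omega)]
  rw [sum_Icc_zero c g (fun k h1 h2 => hz k h1 (by omega)), zero_add]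

lemma sum_Icc_top2 {b : ℕ} (hb : 2 ≤ b) (g : ℕ → ℝ)
    (hz : ∀ k, 1 ≤ k → k ≤ b - 2 → g k = 0) :
    ∑ k ∈ Finset.Icc 1 b, g k = g (b-1) + g b := by
  obtain ⟨c, rfl⟩ : ∃ c, b = c + 2 := ⟨b - 2, by omega⟩
  rw [Finset.sum_Icc_succ_top (by omega), show c+2-1 = c+1 from rfl,
    sum_Icc_top (by omega) g (fun k h1 h2 => hz k h1 (by omega))]

-- specialized fa-lemmas for barred columns
lemma fa_3a (hn : 4 ≤ n) : fa n m (n-3) (n+1) = 0 :=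
  fa_3z hn (by omega) (by omega) (by omega) (by omega)
lemma fa_3b (hn : 4 ≤ n) : fa n m (n-3) (n+2) = 0 :=
  fa_3z hn (by omega) (by omega) (by omega) (by omega)
lemma fa_2a (hn : 4 ≤ n) : fa n m (n-2) (n+1) = 0 :=
  fa_2z hn (by omega) (by omega) (by omega)

lemma sSum_astar_zero (hn : 4 ≤ n) {i : ℕ} (j : ℕ) (hi : i ≤ n-3) :
    sSum n (astar n m) i j = 0 := by
  apply sum_Icc_zero
  intro k h1 h2
  have hk3 : k ≠ n-3 := by omega
  have hk2 : k ≠ n-2 := by omega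
  simp only [aC_astar hn, aB_astar hn, fa_zero_row hk3 hk2]
  ring

lemma sSum_astar_2 (hn : 4 ≤ n) : sSum n (astar n m) (n-2) (n-2) = 0 := by
  unfold sSum
  rw [show n-2-1 = n-3 from by omega]
  rw [sum_Icc_top (by omega) _ (fun k h1 h2 => by
    have hk3 : k ≠ n-3 := by omega
    have hk2 : k ≠ n-2 := by omega
    simp only [aC_astar hn, aB_astar hn, fa_zero_row hk3 hk2]; ring)]
  simp only [aC_astar hn, aB_astar hn]
  rw [show n-2+1 = n-1 from by omega, show 2*n-1-(n-1) = n from by omega,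
    show 2*n-1-(n-2) = n+1 from by omega, show 2*n-1-(n-3) = n+2 from by omega]
  rw [fa_33, fa_32 hn, fa_31 hn, fa_30 hn, fa_3a hn, fa_3b hn]
  ring

lemma sumA_2 (hn : 4 ≤ n) :
    ∑ k ∈ Finset.Icc 1 (n-2-1), (aC n (astar n m) k (n-2) - 2 * aC n (astar n m) k (n-1)
      + aB n (astar n m) k (n-2)) = qv n m - pv n m := by
  rw [show n-2-1 = n-3 from by omega]
  rw [sum_Icc_top (by omega) _ (fun k h1 h2 => by
    have hk3 : k ≠ n-3 := by omega
    have hk2 : k ≠ n-2 := by omega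
    simp only [aC_astar hn, aB_astar hn, fa_zero_row hk3 hk2]; ring)]
  simp only [aC_astar hn, aB_astar hn]
  rw [show 2*n-1-(n-2) = n+1 from by omega, fa_32 hn, fa_31 hn, fa_3a hn]
  ring

lemma sumB_2 (hn : 4 ≤ n) :
    ∑ k ∈ Finset.Icc 1 (n-2-1), (aC n (astar n m) k (n-2) - 2 * aB n (astar n m) k (n-1)
      + aB n (astar n m) k (n-2)) = pv n m - qv n m := by
  rw [show n-2-1 = n-3 from by omega]
  rw [sum_Icc_top (by omega) _ (fun k h1 h2 => by
    have hk3 : k ≠ n-3 := by omega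
    have hk2 : k ≠ n-2 := by omega
    simp only [aC_astar hn, aB_astar hn, fa_zero_row hk3 hk2]; ring)]
  simp only [aC_astar hn, aB_astar hn]
  rw [show 2*n-1-(n-2) = n+1 from by omega, show 2*n-1-(n-1) = n from by omega,
    fa_32 hn, fa_30 hn, fa_3a hn]
  ring

lemma sumA_1 (hn : 4 ≤ n) :
    ∑ k ∈ Finset.Icc 1 (n-1-1), (aC n (astar n m) k (n-2) - 2 * aC n (astar n m) k (n-1)
      + aB n (astar n m) k (n-2)) = qv n m - pv n m - sv n m := by
  rw [show n-1-1 = n-2 from by omega]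
  rw [sum_Icc_top2 (by omega) _ (fun k h1 h2 => by
    have hk3 : k ≠ n-3 := by omega
    have hk2 : k ≠ n-2 := by omega
    simp only [aC_astar hn, aB_astar hn, fa_zero_row hk3 hk2]; ring)]
  simp only [aC_astar hn, aB_astar hn]
  rw [show n-2-1 = n-3 from by omega, show 2*n-1-(n-2) = n+1 from by omega,
    fa_32 hn, fa_31 hn, fa_3a hn, fa_22 hn, fa_21 hn, fa_2a hn]
  ring

lemma sumB_1 (hn : 4 ≤ n) :
    ∑ k ∈ Finset.Icc 1 (n-1-1), (aC n (astar n m) k (n-2) - 2 * aB n (astar n m) k (n-1)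
      + aB n (astar n m) k (n-2)) = pv n m - qv n m - sv n m := by
  rw [show n-1-1 = n-2 from by omega]
  rw [sum_Icc_top2 (by omega) _ (fun k h1 h2 => by
    have hk3 : k ≠ n-3 := by omega
    have hk2 : k ≠ n-2 := by omega
    simp only [aC_astar hn, aB_astar hn, fa_zero_row hk3 hk2]; ring)]
  simp only [aC_astar hn, aB_astar hn]
  rw [show n-2-1 = n-3 from by omega, show 2*n-1-(n-2) = n+1 from by omega,
    show 2*n-1-(n-1) = n from by omega,
    fa_32 hn, fa_30 hn, fa_3a hn, fa_22 hn, fa_20 hn, fa_2a hn]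
  ring

end sums

theorem astar_mem {n : ℕ} (hn : 4 ≤ n) (m : ℕ → ℕ) : astar n m ∈ QPoly n m := by
  have hpq : (0:ℝ) ≤ pv n m := pv_nonneg
  have hqq : (0:ℝ) ≤ qv n m := qv_nonneg
  have hsq : (0:ℝ) ≤ sv n m := sv_nonneg
  refine ⟨?_, ?_, ?_, ?_, ?_, ?_, ?_⟩
  · -- chain
    intro i j h1 h2 h3 h4
    rw [aC_astar hn, aC_astar hn]
    by_cases hi : i = n-3
    · subst hi
      have : j = n-3 := by omega
      subst this
      rw [fa_33, show n-3+1 = n-2 from by omega, fa_32 hn]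
    · rw [fa_zero_row hi (by omega), fa_zero_row hi (by omega)]
  · -- middle relations
    intro i h1 h2
    simp only [aC_astar hn, aB_astar hn,
      show 2*n-1-(n-1) = n from by omega, show 2*n-1-(n-2) = n+1 from by omega]
    rcases (by omega : i = n-3 ∨ i = n-2 ∨ (i ≠ n-3 ∧ i ≠ n-2)) with hi | hi | hi
    · subst hi
      rw [show 2*n-1-(n-3) = n+2 from by omega,
        fa_32 hn, fa_31 hn, fa_30 hn, fa_3a hn, fa_3b hn]
      refine ⟨by linarith, by linarith, by linarith, by linarith, le_refl 0⟩
    · subst hi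
      rw [show 2*n-1-(n-2) = n+1 from by omega,
        fa_22 hn, fa_21 hn, fa_20 hn, fa_2a hn]
      refine ⟨le_refl _, le_refl _, hsq, hsq, le_refl 0⟩
    · simp only [fa_zero_row hi.1 hi.2]
      refine ⟨le_refl 0, le_refl 0, le_refl 0, le_refl 0, le_refl 0⟩
  · -- barred chain
    intro i j h1 h2 h3 h4
    rw [aB_astar hn, aB_astar hn]
    by_cases hi : i = n-3
    · subst hi
      have : j = n-2 := by omega
      subst this
      rw [show 2*n-1-(n-2) = n+1 from by omega, show n-2-1 = n-3 from by omega,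
        show 2*n-1-(n-3) = n+2 from by omega, fa_3a hn, fa_3b hn]
    · rw [fa_zero_row hi (by omega), fa_zero_row hi (by omega)]
  · rw [aC_astar hn, fa_zero_row (by omega) (by omega)]
  · rw [aB_astar hn, fa_zero_row (by omega) (by omega)]
  · -- upper bounds, j ≤ n-2
    intro i j h1 h2 h3 h4
    have hmj : (0:ℝ) ≤ (m j : ℝ) := Nat.cast_nonneg _
    rcases (by omega : i = n-3 ∨ i = n-2 ∨ (i ≠ n-3 ∧ i ≠ n-2 ∧ i ≤ n-3)) with hi | hi | hi
    · subst hi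
      rw [sSum_astar_zero hn j (by omega)]
      rcases (by omega : j = n-3 ∨ j = n-2) with hj | hj
      · subst hj
        simp only [aC_astar hn, aB_astar hn]
        rw [show n-3+1 = n-2 from by omega, show 2*n-1-(n-2) = n+1 from by omega,
          show 2*n-1-(n-3) = n+2 from by omega,
          show 2*n-1-(n-3-1) = n+3 from by omega,
          fa_33, fa_32 hn, fa_3a hn, fa_3b hn,
          fa_3z hn (by omega) (by omega) (by omega) (by omega)]
        constructor <;> linarith
      · subst hj
        simp only [aC_astar hn, aB_astar hn]
        rw [show n-2+1 = n-1 from by omega, show 2*n-1-(n-1) = n from by omega,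
          show 2*n-1-(n-2) = n+1 from by omega, show n-2-1 = n-3 from by omega,
          show 2*n-1-(n-3) = n+2 from by omega,
          fa_32 hn, fa_31 hn, fa_30 hn, fa_3a hn, fa_3b hn]
        constructor <;> linarith
    · subst hi
      have hj : j = n-2 := by omega
      subst hj
      rw [sSum_astar_2 hn]
      simp only [aC_astar hn, aB_astar hn]
      rw [show n-2+1 = n-1 from by omega, show 2*n-1-(n-1) = n from by omega,
        show 2*n-1-(n-2) = n+1 from by omega, show n-2-1 = n-3 from by omega,
        show 2*n-1-(n-3) = n+2 from by omega,
        fa_22 hn, fa_21 hn, fa_20 hn, fa_2a hn,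
        fa_2z hn (by omega) (by omega) (by omega)]
      constructor <;> linarith
    · rw [sSum_astar_zero hn j (by omega)]
      simp only [aC_astar hn, aB_astar hn, fa_zero_row hi.1 hi.2.1]
      constructor <;> linarith
  · -- upper bounds j = n-1, n
    intro i h1 h2
    have hm1 : (0:ℝ) ≤ (m (n-1) : ℝ) := Nat.cast_nonneg _
    have hm2 : (0:ℝ) ≤ (m n : ℝ) := Nat.cast_nonneg _
    have hs1 := sv_eq (n := n) (m := m)
    have hs2 := sv_eq' (n := n) (m := m)
    rcases (by omega : i = n-3 ∨ i = n-2 ∨ i = n-1 ∨ (i ≠ n-3 ∧ i ≠ n-2 ∧ i ≤ n-3))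
      with hi | hi | hi | hi
    · subst hi
      have hz : ∀ g : ℕ → ℝ, (∀ k, 1 ≤ k → k ≤ n-3-1 → g k = 0) →
          ∑ k ∈ Finset.Icc 1 (n-3-1), g k = 0 := fun g hg => sum_Icc_zero _ g hg
      rw [hz _ (fun k hk1 hk2 => by
            simp only [aC_astar hn, aB_astar hn,
              fa_zero_row (show k ≠ n-3 by omega) (show k ≠ n-2 by omega)]; ring),
          hz _ (fun k hk1 hk2 => by
            simp only [aC_astar hn, aB_astar hn,
              fa_zero_row (show k ≠ n-3 by omega) (show k ≠ n-2 by omega)]; ring)]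
      simp only [aC_astar hn, aB_astar hn]
      rw [show 2*n-1-(n-1) = n from by omega, show 2*n-1-(n-2) = n+1 from by omega,
        fa_31 hn, fa_30 hn, fa_3a hn]
      have := pv_le (n := n) (m := m)
      have := qv_le (n := n) (m := m)
      constructor <;> linarith
    · subst hi
      rw [sumA_2 hn, sumB_2 hn]
      simp only [aC_astar hn, aB_astar hn]
      rw [show 2*n-1-(n-1) = n from by omega, show 2*n-1-(n-2) = n+1 from by omega,
        fa_21 hn, fa_20 hn, fa_2a hn]
      constructor <;> linarith
    · subst hi
      rw [sumA_1 hn, sumB_1 hn]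
      simp only [aC_astar hn, aB_astar hn]
      rw [show 2*n-1-(n-1) = n from by omega, show 2*n-1-(n-2) = n+1 from by omega]
      simp only [fa_zero_row (show n-1 ≠ n-3 by omega) (show n-1 ≠ n-2 by omega)]
      constructor <;> linarith
    · have hz : ∀ g : ℕ → ℝ, (∀ k, 1 ≤ k → k ≤ i-1 → g k = 0) →
          ∑ k ∈ Finset.Icc 1 (i-1), g k = 0 := fun g hg => sum_Icc_zero _ g hg
      rw [hz _ (fun k hk1 hk2 => by
            simp only [aC_astar hn, aB_astar hn,
              fa_zero_row (show k ≠ n-3 by omega) (show k ≠ n-2 by omega)]; ring),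
          hz _ (fun k hk1 hk2 => by
            simp only [aC_astar hn, aB_astar hn,
              fa_zero_row (show k ≠ n-3 by omega) (show k ≠ n-2 by omega)]; ring)]
      simp only [aC_astar hn, aB_astar hn, fa_zero_row hi.1 hi.2.1]
      constructor <;> linarith

theorem pin {n : ℕ} {m : ℕ → ℕ} (hn : 4 ≤ n) (x : SIdx n → ℝ)
    (E1 : ∀ i j, 1 ≤ i → i ≤ n-2 → i ≤ j → j+1 ≤ n-2 → aC n x i j = aC n x i (j+1))
    (E3 : ∀ i j, 1 ≤ i → i ≤ n-2 → i+1 ≤ j → j ≤ n-2 → aB n x i j = aB n x i (j-1))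
    (E5 : ∀ i, 1 ≤ i → i ≤ n-2 → aB n x i i = 0)
    (E2 : ∀ i, 1 ≤ i → i ≤ n-4 →
      aC n x i (n-2) = aC n x i (n-1) ∧ aC n x i (n-1) = aB n x i (n-2) ∧
      aB n x i (n-1) = aB n x i (n-2))
    (E4 : aC n x (n-2) (n-2) = aC n x (n-2) (n-1) ∧
      aC n x (n-2) (n-2) = aB n x (n-2) (n-1))
    (E6 : aC n x (n-1) (n-1) = 0) (E7 : aB n x (n-1) (n-1) = 0)
    (E8 : aC n x (n-2) (n-1) = (m (n-1) : ℝ) + aB n x (n-2) (n-2) +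
      ∑ k ∈ Finset.Icc 1 (n-2-1), (aC n x k (n-2) - 2*aC n x k (n-1) + aB n x k (n-2)))
    (E9 : aB n x (n-2) (n-1) = (m n : ℝ) + aB n x (n-2) (n-2) +
      ∑ k ∈ Finset.Icc 1 (n-2-1), (aC n x k (n-2) - 2*aB n x k (n-1) + aB n x k (n-2)))
    (hLR : (m n ≤ m (n-1) ∧ aC n x (n-3) (n-2) = aC n x (n-3) (n-1) ∧
              aB n x (n-3) (n-1) = aB n x (n-3) (n-2)) ∨
           (m (n-1) ≤ m n ∧ aC n x (n-3) (n-2) = aB n x (n-3) (n-1) ∧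
              aC n x (n-3) (n-1) = aB n x (n-3) (n-2))) :
    x = astar n m := by
  -- zero rows
  have ZB : ∀ i, 1 ≤ i → i ≤ n-4 → ∀ j, i ≤ j → j ≤ n-2 → aB n x i j = 0 := by
    intro i h1 h2 j hj1
    induction j, hj1 using Nat.le_induction with
    | base => intro _; exact E5 i h1 (by omega)
    | succ j hj ih =>
      intro h2j
      have h := E3 i (j+1) h1 (by omega) (by omega) h2j
      rw [Nat.add_sub_cancel] at h
      rw [h]; exact ih (by omega)
  have ZC : ∀ i, 1 ≤ i → i ≤ n-4 → ∀ j, i ≤ j → j ≤ n-2 → aC n x i j = 0 := by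
    intro i h1 h2
    have base : aC n x i (n-2) = 0 := by
      rw [(E2 i h1 h2).1, (E2 i h1 h2).2.1]
      exact ZB i h1 h2 (n-2) (by omega) (le_refl _)
    have down : ∀ t j, i ≤ j → j + t = n-2 → aC n x i j = 0 := by
      intro t
      induction t with
      | zero => intro j hj1 hj2; rw [show j = n-2 from by omega]; exact base
      | succ t ih =>
        intro j hj1 hj2
        rw [E1 i j h1 (by omega) hj1 (by omega)]
        exact ih (j+1) (by omega) (by omega)
    intro j hj1 hj2
    exact down (n-2-j) j hj1 (by omega)
  have Z : ∀ i j, 1 ≤ i → i ≤ n-4 → aC n x i j = 0 := by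
    intro i j h1 h2
    by_cases hr : 1 ≤ i ∧ i ≤ j ∧ j ≤ 2*n-1-i
    · rcases (by omega : (i ≤ j ∧ j ≤ n-2) ∨ j = n-1 ∨ (n ≤ j ∧ j ≤ 2*n-1-i)) with h | h | h
      · exact ZC i h1 h2 j h.1 h.2
      · rw [h, (E2 i h1 h2).2.1]
        exact ZB i h1 h2 (n-2) (by omega) (le_refl _)
      · have hid : aC n x i j = aB n x i (2*n-1-j) := by
          rw [aB, show 2*n-1-(2*n-1-j) = j from by omega]
        rw [hid]
        rcases (by omega : (i ≤ 2*n-1-j ∧ 2*n-1-j ≤ n-2) ∨ 2*n-1-j = n-1) with h' | h'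
        · exact ZB i h1 h2 _ h'.1 h'.2
        · rw [h', (E2 i h1 h2).2.2]
          exact ZB i h1 h2 (n-2) (by omega) (le_refl _)
    · exact aC_out hr
  -- evaluate the sums in E8, E9
  have S8 : ∑ k ∈ Finset.Icc 1 (n-2-1), (aC n x k (n-2) - 2*aC n x k (n-1) + aB n x k (n-2))
      = aC n x (n-3) (n-2) - 2*aC n x (n-3) (n-1) + aB n x (n-3) (n-2) := by
    rw [show n-2-1 = n-3 from by omega]
    exact sum_Icc_top (by omega) _ (fun k h1 h2 => by
      rw [Z k _ h1 (by omega), Z k _ h1 (by omega), aB, Z k _ h1 (by omega)]; ring)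
  have S9 : ∑ k ∈ Finset.Icc 1 (n-2-1), (aC n x k (n-2) - 2*aB n x k (n-1) + aB n x k (n-2))
      = aC n x (n-3) (n-2) - 2*aB n x (n-3) (n-1) + aB n x (n-3) (n-2) := by
    rw [show n-2-1 = n-3 from by omega]
    exact sum_Icc_top (by omega) _ (fun k h1 h2 => by
      rw [Z k _ h1 (by omega), aB, Z k _ h1 (by omega), aB, Z k _ h1 (by omega)]; ring)
  rw [S8] at E8; rw [S9] at E9
  -- basic row facts
  have B33 : aB n x (n-3) (n-3) = 0 := E5 (n-3) (by omega) (by omega)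
  have B32 : aB n x (n-3) (n-2) = 0 := by
    have h := E3 (n-3) (n-2) (by omega) (by omega) (by omega) (by omega)
    rw [show n-2-1 = n-3 from by omega] at h
    rw [h]; exact B33
  have B22 : aB n x (n-2) (n-2) = 0 := E5 (n-2) (by omega) (by omega)
  have C33 : aC n x (n-3) (n-3) = aC n x (n-3) (n-2) := by
    have h := E1 (n-3) (n-3) (by omega) (by omega) (by omega) (by omega)
    rw [show n-3+1 = n-2 from by omega] at h
    exact h
  -- the ten values
  have VALS : aC n x (n-3) (n-3) = pv n m + qv n m ∧ aC n x (n-3) (n-2) = pv n m + qv n m ∧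
      aC n x (n-3) (n-1) = pv n m ∧ aB n x (n-3) (n-1) = qv n m ∧
      aC n x (n-2) (n-2) = sv n m ∧ aC n x (n-2) (n-1) = sv n m ∧
      aB n x (n-2) (n-1) = sv n m := by
    have hs1 := sv_eq (n := n) (m := m)
    have hs2 := sv_eq' (n := n) (m := m)
    rcases hLR with ⟨hmle, hEa, hEb⟩ | ⟨hmle, hEa, hEb⟩
    · have hmle' : (m n : ℝ) ≤ (m (n-1) : ℝ) := Nat.cast_le.2 hmle
      have hpv : pv n m = ((m (n-1):ℝ) - (m n:ℝ))/2 := max_eq_left (by linarith)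
      have hqv : qv n m = 0 := max_eq_right (by linarith)
      have B31 : aB n x (n-3) (n-1) = 0 := by rw [hEb]; exact B32
      simp only [B31, B32, B22, ← hEa] at E8 E9
      have hT : aC n x (n-3) (n-2) = pv n m := by rw [hpv]; linarith [E4.1, E4.2, E8, E9]
      refine ⟨?_, ?_, ?_, ?_, ?_, ?_, ?_⟩ <;>
        first
          | (rw [C33, hT, hqv]; ring)
          | (rw [hT, hqv]; ring)
          | (rw [← hEa, hT, hqv]; ring)
          | (rw [B31, hqv])
          | linarith [E4.1, E4.2, E8, E9, hT, hpv, hqv]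
    · have hmle' : (m (n-1) : ℝ) ≤ (m n : ℝ) := Nat.cast_le.2 hmle
      have hpv : pv n m = 0 := max_eq_right (by linarith)
      have hqv : qv n m = ((m n:ℝ) - (m (n-1):ℝ))/2 := max_eq_left (by linarith)
      have C31 : aC n x (n-3) (n-1) = 0 := by rw [hEb]; exact B32
      simp only [C31, B32, B22, ← hEa] at E8 E9
      have hT : aC n x (n-3) (n-2) = qv n m := by rw [hqv]; linarith [E4.1, E4.2, E8, E9]
      refine ⟨?_, ?_, ?_, ?_, ?_, ?_, ?_⟩ <;>
        first
          | (rw [C33, hT, hpv]; ring)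
          | (rw [hT, hpv]; ring)
          | (rw [C31, hpv])
          | (rw [← hEa, hT])
          | linarith [E4.1, E4.2, E8, E9, hT, hpv, hqv]
  obtain ⟨V1, V2, V3, V4, V5, V6, V7⟩ := VALS
  -- conclude
  funext p
  obtain ⟨⟨i, j⟩, hp⟩ := p
  show x ⟨(i,j), hp⟩ = fa n m i j
  have hxc : aC n x i j = x ⟨(i,j), hp⟩ := by rw [aC, dif_pos hp]
  rw [← hxc]
  rcases (by omega : (1 ≤ i ∧ i ≤ n-4) ∨ i = n-3 ∨ i = n-2 ∨ i = n-1) with hi | hi | hi | hi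
  · rw [Z i j hi.1 hi.2, fa_zero_row (by omega) (by omega)]
  · subst hi
    have hrange : n-3 ≤ j ∧ j ≤ n+2 := by omega
    rcases (by omega : j = n-3 ∨ j = n-2 ∨ j = n-1 ∨ j = n ∨ j = n+1 ∨ j = n+2)
      with hj | hj | hj | hj | hj | hj <;> rw [hj]
    · rw [V1, fa_33]
    · rw [V2, fa_32 hn]
    · rw [V3, fa_31 hn]
    · rw [show aC n x (n-3) n = aB n x (n-3) (n-1) from by
        rw [aB, show 2*n-1-(n-1) = n from by omega], V4, fa_30 hn]
    · rw [show aC n x (n-3) (n+1) = aB n x (n-3) (n-2) from by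
        rw [aB, show 2*n-1-(n-2) = n+1 from by omega], B32, fa_3a hn]
    · rw [show aC n x (n-3) (n+2) = aB n x (n-3) (n-3) from by
        rw [aB, show 2*n-1-(n-3) = n+2 from by omega], B33, fa_3b hn]
  · subst hi
    rcases (by omega : j = n-2 ∨ j = n-1 ∨ j = n ∨ j = n+1)
      with hj | hj | hj | hj <;> rw [hj]
    · rw [V5, fa_22 hn]
    · rw [V6, fa_21 hn]
    · rw [show aC n x (n-2) n = aB n x (n-2) (n-1) from by
        rw [aB, show 2*n-1-(n-1) = n from by omega], V7, fa_20 hn]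
    · rw [show aC n x (n-2) (n+1) = aB n x (n-2) (n-2) from by
        rw [aB, show 2*n-1-(n-2) = n+1 from by omega], B22, fa_2a hn]
  · subst hi
    rcases (by omega : j = n-1 ∨ j = n) with hj | hj <;> rw [hj]
    · rw [E6, fa_zero_row (by omega) (by omega)]
    · rw [show aC n x (n-1) n = aB n x (n-1) (n-1) from by
        rw [aB, show 2*n-1-(n-1) = n from by omega], E7,
        fa_zero_row (by omega) (by omega)]

lemma slack0 {t₁ t₂ A₁ A₂ : ℝ} (h1 : 0 < t₁) (h2 : 0 < t₂) (hA : 0 ≤ A₁) (hB : 0 ≤ A₂)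
    (h : t₁*A₁ + t₂*A₂ = 0) : A₁ = 0 ∧ A₂ = 0 := by
  constructor <;> nlinarith


set_option maxHeartbeats 2000000 in
theorem statement14 (n : ℕ) (hn : 4 ≤ n) (m : ℕ → ℕ) (hpar : Odd (m (n - 1) + m n)) :
    ∃ a ∈ (QPoly n m).extremePoints ℝ, ¬ ∀ p : SIdx n, ∃ k : ℤ, a p = k := by
  refine ⟨astar n m, ⟨astar_mem hn m, ?_⟩, ?_⟩
  · rintro x₁ hx₁ x₂ hx₂ ⟨t₁, t₂, ht₁, ht₂, hsum, hcomb⟩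
    have hcb : ∀ i j, t₁ * aC n x₁ i j + t₂ * aC n x₂ i j = aC n (astar n m) i j := by
      intro i j; rw [← hcomb, aC_combo]
    have hcbB : ∀ i j, t₁ * aB n x₁ i j + t₂ * aB n x₂ i j = aB n (astar n m) i j :=
      fun i j => hcb i (2*n-1-j)
    obtain ⟨P1, P2, P3, P4, P5, P6, P7⟩ := hx₁
    obtain ⟨Q1, Q2, Q3, Q4, Q5, Q6, Q7⟩ := hx₂
    -- E1 : chain equalities
    have hE1 : ∀ i j, 1 ≤ i → i ≤ n-2 → i ≤ j → j+1 ≤ n-2 →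
        (aC n x₁ i j = aC n x₁ i (j+1) ∧ aC n x₂ i j = aC n x₂ i (j+1)) := by
      intro i j h1 h2 h3 h4
      have hfa : fa n m i j = fa n m i (j+1) := by
        by_cases hi : i = n-3
        · subst hi
          rw [show j = n-3 from by omega, fa_33, show n-3+1 = n-2 from by omega, fa_32 hn]
        · rw [fa_zero_row hi (by omega), fa_zero_row hi (by omega)]
      have c1 := hcb i j; have c2 := hcb i (j+1)
      rw [aC_astar hn] at c1 c2
      have := slack0 ht₁ ht₂ (by linarith [P1 i j h1 h2 h3 h4])
        (by linarith [Q1 i j h1 h2 h3 h4])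
        (show t₁*(aC n x₁ i j - aC n x₁ i (j+1)) + t₂*(aC n x₂ i j - aC n x₂ i (j+1)) = 0
          from by linarith)
      exact ⟨by linarith [this.1], by linarith [this.2]⟩
    -- E3 : barred chain equalities
    have hE3 : ∀ i j, 1 ≤ i → i ≤ n-2 → i+1 ≤ j → j ≤ n-2 →
        (aB n x₁ i j = aB n x₁ i (j-1) ∧ aB n x₂ i j = aB n x₂ i (j-1)) := by
      intro i j h1 h2 h3 h4
      have hfa : aB n (astar n m) i j = aB n (astar n m) i (j-1) := by
        rw [aB_astar hn, aB_astar hn]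
        by_cases hi : i = n-3
        · subst hi
          rw [show j = n-2 from by omega, show 2*n-1-(n-2) = n+1 from by omega,
            show n-2-1 = n-3 from by omega, show 2*n-1-(n-3) = n+2 from by omega,
            fa_3a hn, fa_3b hn]
        · rw [fa_zero_row hi (by omega), fa_zero_row hi (by omega)]
      have c1 := hcbB i j; have c2 := hcbB i (j-1)
      have := slack0 ht₁ ht₂ (by linarith [P3 i j h1 h2 h3 h4])
        (by linarith [Q3 i j h1 h2 h3 h4])
        (show t₁*(aB n x₁ i j - aB n x₁ i (j-1)) + t₂*(aB n x₂ i j - aB n x₂ i (j-1)) = 0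
          from by rw [hfa] at c1; linarith)
      exact ⟨by linarith [this.1], by linarith [this.2]⟩
    -- E5 : aB i i = 0
    have hE5 : ∀ i, 1 ≤ i → i ≤ n-2 → (aB n x₁ i i = 0 ∧ aB n x₂ i i = 0) := by
      intro i h1 h2
      have hfa : aB n (astar n m) i i = 0 := by
        rw [aB_astar hn]
        rcases (by omega : i = n-3 ∨ i = n-2 ∨ (i ≠ n-3 ∧ i ≠ n-2)) with hi | hi | hi
        · rw [hi, show 2*n-1-(n-3) = n+2 from by omega, fa_3b hn]
        · rw [hi, show 2*n-1-(n-2) = n+1 from by omega, fa_2a hn]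
        · rw [fa_zero_row hi.1 hi.2]
      have c1 := hcbB i i
      exact slack0 ht₁ ht₂ (P2 i h1 h2).2.2.2.2 (Q2 i h1 h2).2.2.2.2
        (by rw [hfa] at c1; linarith)
    -- E2 : middle equalities on zero rows
    have hE2 : ∀ i, 1 ≤ i → i ≤ n-4 →
        ((aC n x₁ i (n-2) = aC n x₁ i (n-1) ∧ aC n x₁ i (n-1) = aB n x₁ i (n-2) ∧
          aB n x₁ i (n-1) = aB n x₁ i (n-2)) ∧
         (aC n x₂ i (n-2) = aC n x₂ i (n-1) ∧ aC n x₂ i (n-1) = aB n x₂ i (n-2) ∧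
          aB n x₂ i (n-1) = aB n x₂ i (n-2))) := by
      intro i h1 h2
      have hi3 : i ≠ n-3 := by omega
      have hi2 : i ≠ n-2 := by omega
      have z : ∀ j, aC n (astar n m) i j = 0 := fun j => by
        rw [aC_astar hn, fa_zero_row hi3 hi2]
      have zB : ∀ j, aB n (astar n m) i j = 0 := fun j => z _
      have c1 := hcb i (n-2); have c2 := hcb i (n-1)
      have c3 := hcbB i (n-2); have c4 := hcbB i (n-1)
      rw [z] at c1 c2; rw [zB] at c3 c4
      have u1 := slack0 ht₁ ht₂
        (by linarith [(P2 i h1 (by omega)).1]) (by linarith [(Q2 i h1 (by omega)).1])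
        (show t₁*(aC n x₁ i (n-2) - aC n x₁ i (n-1)) +
          t₂*(aC n x₂ i (n-2) - aC n x₂ i (n-1)) = 0 from by linarith)
      have u2 := slack0 ht₁ ht₂
        (by linarith [(P2 i h1 (by omega)).2.2.1]) (by linarith [(Q2 i h1 (by omega)).2.2.1])
        (show t₁*(aC n x₁ i (n-1) - aB n x₁ i (n-2)) +
          t₂*(aC n x₂ i (n-1) - aB n x₂ i (n-2)) = 0 from by linarith)
      have u3 := slack0 ht₁ ht₂
        (by linarith [(P2 i h1 (by omega)).2.2.2.1]) (by linarith [(Q2 i h1 (by omega)).2.2.2.1])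
        (show t₁*(aB n x₁ i (n-1) - aB n x₁ i (n-2)) +
          t₂*(aB n x₂ i (n-1) - aB n x₂ i (n-2)) = 0 from by linarith)
      exact ⟨⟨by linarith [u1.1], by linarith [u2.1], by linarith [u3.1]⟩,
        ⟨by linarith [u1.2], by linarith [u2.2], by linarith [u3.2]⟩⟩
    -- E4 : row n-2 middle equalities
    have hE4 : (aC n x₁ (n-2) (n-2) = aC n x₁ (n-2) (n-1) ∧
          aC n x₁ (n-2) (n-2) = aB n x₁ (n-2) (n-1)) ∧
        (aC n x₂ (n-2) (n-2) = aC n x₂ (n-2) (n-1) ∧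
          aC n x₂ (n-2) (n-2) = aB n x₂ (n-2) (n-1)) := by
      have c1 := hcb (n-2) (n-2); have c2 := hcb (n-2) (n-1); have c3 := hcbB (n-2) (n-1)
      rw [aC_astar hn, fa_22 hn] at c1
      rw [aC_astar hn, fa_21 hn] at c2
      rw [aB_astar hn, show 2*n-1-(n-1) = n from by omega, fa_20 hn] at c3
      have u1 := slack0 ht₁ ht₂
        (by linarith [(P2 (n-2) (by omega) (by omega)).1])
        (by linarith [(Q2 (n-2) (by omega) (by omega)).1])
        (show t₁*(aC n x₁ (n-2) (n-2) - aC n x₁ (n-2) (n-1)) +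
          t₂*(aC n x₂ (n-2) (n-2) - aC n x₂ (n-2) (n-1)) = 0 from by linarith)
      have u2 := slack0 ht₁ ht₂
        (by linarith [(P2 (n-2) (by omega) (by omega)).2.1])
        (by linarith [(Q2 (n-2) (by omega) (by omega)).2.1])
        (show t₁*(aC n x₁ (n-2) (n-2) - aB n x₁ (n-2) (n-1)) +
          t₂*(aC n x₂ (n-2) (n-2) - aB n x₂ (n-2) (n-1)) = 0 from by linarith)
      exact ⟨⟨by linarith [u1.1], by linarith [u2.1]⟩,
        ⟨by linarith [u1.2], by linarith [u2.2]⟩⟩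
    -- E6, E7
    have hE6 : aC n x₁ (n-1) (n-1) = 0 ∧ aC n x₂ (n-1) (n-1) = 0 := by
      have c1 := hcb (n-1) (n-1)
      rw [aC_astar hn, fa_zero_row (show n-1 ≠ n-3 from by omega)
        (show n-1 ≠ n-2 from by omega)] at c1
      exact slack0 ht₁ ht₂ P4 Q4 (by linarith)
    have hE7 : aB n x₁ (n-1) (n-1) = 0 ∧ aB n x₂ (n-1) (n-1) = 0 := by
      have c1 := hcbB (n-1) (n-1)
      rw [aB_astar hn, show 2*n-1-(n-1) = n from by omega,
        fa_zero_row (show n-1 ≠ n-3 from by omega) (show n-1 ≠ n-2 from by omega)] at c1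
      exact slack0 ht₁ ht₂ P5 Q5 (by linarith)
    -- E8, E9 : tight upper bounds of row n-2 at j = n-1, n
    have hmm : ∀ M : ℝ, t₁ * M + t₂ * M = M := by
      intro M; rw [← add_mul, hsum, one_mul]
    have hS1 : t₁ * (∑ k ∈ Finset.Icc 1 (n-2-1),
          (aC n x₁ k (n-2) - 2*aC n x₁ k (n-1) + aB n x₁ k (n-2))) +
        t₂ * (∑ k ∈ Finset.Icc 1 (n-2-1),
          (aC n x₂ k (n-2) - 2*aC n x₂ k (n-1) + aB n x₂ k (n-2))) = qv n m - pv n m := by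
      rw [Finset.mul_sum, Finset.mul_sum, ← Finset.sum_add_distrib, ← sumA_2 hn]
      exact Finset.sum_congr rfl fun k _ => by
        rw [← hcb k (n-2), ← hcb k (n-1), ← hcbB k (n-2)]; ring
    have hS2 : t₁ * (∑ k ∈ Finset.Icc 1 (n-2-1),
          (aC n x₁ k (n-2) - 2*aB n x₁ k (n-1) + aB n x₁ k (n-2))) +
        t₂ * (∑ k ∈ Finset.Icc 1 (n-2-1),
          (aC n x₂ k (n-2) - 2*aB n x₂ k (n-1) + aB n x₂ k (n-2))) = pv n m - qv n m := by
      rw [Finset.mul_sum, Finset.mul_sum, ← Finset.sum_add_distrib, ← sumB_2 hn]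
      exact Finset.sum_congr rfl fun k _ => by
        rw [← hcb k (n-2), ← hcbB k (n-1), ← hcbB k (n-2)]; ring
    have c21 := hcb (n-2) (n-1); have c20 := hcbB (n-2) (n-1); have c22 := hcbB (n-2) (n-2)
    rw [aC_astar hn, fa_21 hn] at c21
    rw [aB_astar hn, show 2*n-1-(n-1) = n from by omega, fa_20 hn] at c20
    rw [aB_astar hn, show 2*n-1-(n-2) = n+1 from by omega, fa_2a hn] at c22
    have hs1 := sv_eq (n := n) (m := m)
    have hs2 := sv_eq' (n := n) (m := m)
    have hE8 : (aC n x₁ (n-2) (n-1) = (m (n-1) : ℝ) + aB n x₁ (n-2) (n-2) +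
          ∑ k ∈ Finset.Icc 1 (n-2-1),
            (aC n x₁ k (n-2) - 2*aC n x₁ k (n-1) + aB n x₁ k (n-2))) ∧
        (aC n x₂ (n-2) (n-1) = (m (n-1) : ℝ) + aB n x₂ (n-2) (n-2) +
          ∑ k ∈ Finset.Icc 1 (n-2-1),
            (aC n x₂ k (n-2) - 2*aC n x₂ k (n-1) + aB n x₂ k (n-2))) := by
      have u := slack0 ht₁ ht₂
        (by linarith [(P7 (n-2) (by omega) (by omega)).1])
        (by linarith [(Q7 (n-2) (by omega) (by omega)).1])
        (show t₁*((m (n-1):ℝ) + aB n x₁ (n-2) (n-2) + ∑ k ∈ Finset.Icc 1 (n-2-1),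
            (aC n x₁ k (n-2) - 2*aC n x₁ k (n-1) + aB n x₁ k (n-2)) - aC n x₁ (n-2) (n-1)) +
          t₂*((m (n-1):ℝ) + aB n x₂ (n-2) (n-2) + ∑ k ∈ Finset.Icc 1 (n-2-1),
            (aC n x₂ k (n-2) - 2*aC n x₂ k (n-1) + aB n x₂ k (n-2)) - aC n x₂ (n-2) (n-1)) = 0
          from by
            have := hmm (m (n-1) : ℝ)
            linarith [hS1])
      exact ⟨by linarith [u.1], by linarith [u.2]⟩
    have hE9 : (aB n x₁ (n-2) (n-1) = (m n : ℝ) + aB n x₁ (n-2) (n-2) +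
          ∑ k ∈ Finset.Icc 1 (n-2-1),
            (aC n x₁ k (n-2) - 2*aB n x₁ k (n-1) + aB n x₁ k (n-2))) ∧
        (aB n x₂ (n-2) (n-1) = (m n : ℝ) + aB n x₂ (n-2) (n-2) +
          ∑ k ∈ Finset.Icc 1 (n-2-1),
            (aC n x₂ k (n-2) - 2*aB n x₂ k (n-1) + aB n x₂ k (n-2))) := by
      have u := slack0 ht₁ ht₂
        (by linarith [(P7 (n-2) (by omega) (by omega)).2])
        (by linarith [(Q7 (n-2) (by omega) (by omega)).2])
        (show t₁*((m n:ℝ) + aB n x₁ (n-2) (n-2) + ∑ k ∈ Finset.Icc 1 (n-2-1),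
            (aC n x₁ k (n-2) - 2*aB n x₁ k (n-1) + aB n x₁ k (n-2)) - aB n x₁ (n-2) (n-1)) +
          t₂*((m n:ℝ) + aB n x₂ (n-2) (n-2) + ∑ k ∈ Finset.Icc 1 (n-2-1),
            (aC n x₂ k (n-2) - 2*aB n x₂ k (n-1) + aB n x₂ k (n-2)) - aB n x₂ (n-2) (n-1)) = 0
          from by
            have := hmm (m n : ℝ)
            linarith [hS2])
      exact ⟨by linarith [u.1], by linarith [u.2]⟩
    -- E10 : case-dependent row n-3 equalities
    have c32 := hcb (n-3) (n-2); have c31 := hcb (n-3) (n-1)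
    have c30 := hcbB (n-3) (n-1); have c3a := hcbB (n-3) (n-2)
    rw [aC_astar hn, fa_32 hn] at c32
    rw [aC_astar hn, fa_31 hn] at c31
    rw [aB_astar hn, show 2*n-1-(n-1) = n from by omega, fa_30 hn] at c30
    rw [aB_astar hn, show 2*n-1-(n-2) = n+1 from by omega, fa_3a hn] at c3a
    have hE10 : ((m n ≤ m (n-1) ∧ aC n x₁ (n-3) (n-2) = aC n x₁ (n-3) (n-1) ∧
              aB n x₁ (n-3) (n-1) = aB n x₁ (n-3) (n-2)) ∨
           (m (n-1) ≤ m n ∧ aC n x₁ (n-3) (n-2) = aB n x₁ (n-3) (n-1) ∧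
              aC n x₁ (n-3) (n-1) = aB n x₁ (n-3) (n-2))) ∧
        ((m n ≤ m (n-1) ∧ aC n x₂ (n-3) (n-2) = aC n x₂ (n-3) (n-1) ∧
              aB n x₂ (n-3) (n-1) = aB n x₂ (n-3) (n-2)) ∨
           (m (n-1) ≤ m n ∧ aC n x₂ (n-3) (n-2) = aB n x₂ (n-3) (n-1) ∧
              aC n x₂ (n-3) (n-1) = aB n x₂ (n-3) (n-2))) := by
      rcases le_total (m n) (m (n-1)) with hmle | hmle
      · have hmle' : (m n : ℝ) ≤ (m (n-1) : ℝ) := Nat.cast_le.2 hmle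
        have hpv : pv n m = ((m (n-1):ℝ) - (m n:ℝ))/2 := max_eq_left (by linarith)
        have hqv : qv n m = 0 := max_eq_right (by linarith)
        have u1 := slack0 ht₁ ht₂
          (by linarith [(P2 (n-3) (by omega) (by omega)).1])
          (by linarith [(Q2 (n-3) (by omega) (by omega)).1])
          (show t₁*(aC n x₁ (n-3) (n-2) - aC n x₁ (n-3) (n-1)) +
            t₂*(aC n x₂ (n-3) (n-2) - aC n x₂ (n-3) (n-1)) = 0 from by
              rw [hqv] at c32 c30; rw [hpv] at c32 c31; linarith)
        have u2 := slack0 ht₁ ht₂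
          (by linarith [(P2 (n-3) (by omega) (by omega)).2.2.2.1])
          (by linarith [(Q2 (n-3) (by omega) (by omega)).2.2.2.1])
          (show t₁*(aB n x₁ (n-3) (n-1) - aB n x₁ (n-3) (n-2)) +
            t₂*(aB n x₂ (n-3) (n-1) - aB n x₂ (n-3) (n-2)) = 0 from by
              rw [hqv] at c30; linarith)
        exact ⟨Or.inl ⟨hmle, by linarith [u1.1], by linarith [u2.1]⟩,
          Or.inl ⟨hmle, by linarith [u1.2], by linarith [u2.2]⟩⟩
      · have hmle' : (m (n-1) : ℝ) ≤ (m n : ℝ) := Nat.cast_le.2 hmle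
        have hpv : pv n m = 0 := max_eq_right (by linarith)
        have hqv : qv n m = ((m n:ℝ) - (m (n-1):ℝ))/2 := max_eq_left (by linarith)
        have u1 := slack0 ht₁ ht₂
          (by linarith [(P2 (n-3) (by omega) (by omega)).2.1])
          (by linarith [(Q2 (n-3) (by omega) (by omega)).2.1])
          (show t₁*(aC n x₁ (n-3) (n-2) - aB n x₁ (n-3) (n-1)) +
            t₂*(aC n x₂ (n-3) (n-2) - aB n x₂ (n-3) (n-1)) = 0 from by
              rw [hpv] at c32 c31; rw [hqv] at c32 c30; linarith)
        have u2 := slack0 ht₁ ht₂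
          (by linarith [(P2 (n-3) (by omega) (by omega)).2.2.1])
          (by linarith [(Q2 (n-3) (by omega) (by omega)).2.2.1])
          (show t₁*(aC n x₁ (n-3) (n-1) - aB n x₁ (n-3) (n-2)) +
            t₂*(aC n x₂ (n-3) (n-1) - aB n x₂ (n-3) (n-2)) = 0 from by
              rw [hpv] at c31; linarith)
        exact ⟨Or.inr ⟨hmle, by linarith [u1.1], by linarith [u2.1]⟩,
          Or.inr ⟨hmle, by linarith [u1.2], by linarith [u2.2]⟩⟩
    · exact pin hn x₁ (fun i j h1 h2 h3 h4 => (hE1 i j h1 h2 h3 h4).1)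
        (fun i j h1 h2 h3 h4 => (hE3 i j h1 h2 h3 h4).1)
        (fun i h1 h2 => (hE5 i h1 h2).1) (fun i h1 h2 => (hE2 i h1 h2).1)
        hE4.1 hE6.1 hE7.1 hE8.1 hE9.1 hE10.1
  · intro hall
    have hp : 1 ≤ (n-2, n-2).1 ∧ (n-2, n-2).1 ≤ (n-2, n-2).2 ∧
        (n-2, n-2).2 ≤ 2*n-1-(n-2, n-2).1 := by
      refine ⟨by omega, le_refl _, by omega⟩
    obtain ⟨k, hk⟩ := hall ⟨(n-2, n-2), hp⟩
    have hv : astar n m ⟨(n-2, n-2), hp⟩ = sv n m := fa_22 hn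
    rw [hv, sv] at hk
    obtain ⟨l, hl⟩ := hpar
    have h2 : (m (n-1) : ℝ) + (m n : ℝ) = 2*(k:ℝ) := by linarith
    have h3 : (m (n-1) : ℤ) + (m n : ℤ) = 2*k := by exact_mod_cast h2
    omega
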